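/- For every w ∈ ℝ^d, the regularized loss L_λ satisfies the exact identity ∇L_λ(w)·(c + λw) = (1−β) Var_{x∼φ(·;w)}[(c + λw)·x] + βρ Var_{x∼φ(·;ρw)}[(c + λw)·x]. -/

import Mathlib

open Finset
open scoped InnerProductSpace BigOperators

noncomputable section

/-- The Gibbs distribution on a finite set `X ⊆ ℝ^d` with parameter `w`:
`φ(x; w) = exp(w·x) / ∑_{y ∈ X} exp(w·y)`. -/
def gibbs {d : ℕ} (X : Finset (EuclideanSpace ℝ (Fin d)))
    (w x : EuclideanSpace ℝ (Fin d)) : ℝ :=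
  Real.exp ⟪w, x⟫_ℝ / ∑ y ∈ X, Real.exp ⟪w, y⟫_ℝ

/-- Expectation of a real function under the Gibbs distribution. -/
def gibbsExp {d : ℕ} (X : Finset (EuclideanSpace ℝ (Fin d)))
    (w : EuclideanSpace ℝ (Fin d)) (f : EuclideanSpace ℝ (Fin d) → ℝ) : ℝ :=
  ∑ x ∈ X, gibbs X w x * f x

/-- Variance of a real function under the Gibbs distribution. -/
def gibbsVar {d : ℕ} (X : Finset (EuclideanSpace ℝ (Fin d)))
    (w : EuclideanSpace ℝ (Fin d)) (f : EuclideanSpace ℝ (Fin d) → ℝ) : ℝ :=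
  gibbsExp X w (fun x => f x ^ 2) - (gibbsExp X w f) ^ 2

/-- Mean (a vector) of the Gibbs distribution. -/
def gibbsMean {d : ℕ} (X : Finset (EuclideanSpace ℝ (Fin d)))
    (w : EuclideanSpace ℝ (Fin d)) : EuclideanSpace ℝ (Fin d) :=
  ∑ x ∈ X, gibbs X w x • x

/-- The negative entropy `H(w) = E_{x ∼ φ(·;w)}[log φ(x;w)]`. -/
def negEnt {d : ℕ} (X : Finset (EuclideanSpace ℝ (Fin d)))
    (w : EuclideanSpace ℝ (Fin d)) : ℝ :=
  ∑ x ∈ X, gibbs X w x * Real.log (gibbs X w x)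


/-- The fast/slow mixture generator `p(x;w) = (1−β)φ(x;w) + βφ(x;ρw)`. -/
def pmix {d : ℕ} (X : Finset (EuclideanSpace ℝ (Fin d))) (β ρ : ℝ)
    (w x : EuclideanSpace ℝ (Fin d)) : ℝ :=
  (1 - β) * gibbs X w x + β * gibbs X (ρ • w) x

/-- The regularizer `R(w) = (1−β)H(w) + (β/ρ)H(ρw)`. -/
def reg {d : ℕ} (X : Finset (EuclideanSpace ℝ (Fin d))) (β ρ : ℝ)
    (w : EuclideanSpace ℝ (Fin d)) : ℝ :=
  (1 - β) * negEnt X w + (β / ρ) * negEnt X (ρ • w)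

/-- The regularized loss `L_λ(w) = E_{x∼p(·;w)}[c·x] + λ R(w)`. -/
def rloss {d : ℕ} (X : Finset (EuclideanSpace ℝ (Fin d))) (β ρ lam : ℝ)
    (c w : EuclideanSpace ℝ (Fin d)) : ℝ :=
  (∑ x ∈ X, pmix X β ρ w x * ⟪c, x⟫_ℝ) + lam * reg X β ρ w


section AuxGrad

variable {d : ℕ}

/-- Partition function. -/
def Zs (X : Finset (EuclideanSpace ℝ (Fin d))) (w : EuclideanSpace ℝ (Fin d)) : ℝ :=
  ∑ y ∈ X, Real.exp ⟪w, y⟫_ℝ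

lemma Zs_pos {X : Finset (EuclideanSpace ℝ (Fin d))} (hX : X.Nonempty)
    (w : EuclideanSpace ℝ (Fin d)) : 0 < Zs X w :=
  Finset.sum_pos (fun _ _ => Real.exp_pos _) hX

/-- The single-Gibbs regularized loss in closed form. -/
def Ff (X : Finset (EuclideanSpace ℝ (Fin d))) (c : EuclideanSpace ℝ (Fin d)) (lam : ℝ)
    (w : EuclideanSpace ℝ (Fin d)) : ℝ :=
  (∑ x ∈ X, Real.exp ⟪w, x⟫_ℝ * ⟪c, x⟫_ℝ) * (Zs X w)⁻¹
    + lam * ((∑ x ∈ X, Real.exp ⟪w, x⟫_ℝ * ⟪w, x⟫_ℝ) * (Zs X w)⁻¹ - Real.log (Zs X w))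

lemma gibbsExp_eq (X : Finset (EuclideanSpace ℝ (Fin d))) (w : EuclideanSpace ℝ (Fin d))
    (f : EuclideanSpace ℝ (Fin d) → ℝ) :
    gibbsExp X w f = (∑ x ∈ X, Real.exp ⟪w, x⟫_ℝ * f x) * (Zs X w)⁻¹ := by
  rw [gibbsExp, Finset.sum_mul]
  refine Finset.sum_congr rfl fun x _ => ?_
  rw [gibbs]; show Real.exp ⟪w, x⟫_ℝ / Zs X w * f x = _; ring

lemma negEnt_eq {X : Finset (EuclideanSpace ℝ (Fin d))} (hX : X.Nonempty)
    (w : EuclideanSpace ℝ (Fin d)) :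
    negEnt X w = (∑ x ∈ X, Real.exp ⟪w, x⟫_ℝ * ⟪w, x⟫_ℝ) * (Zs X w)⁻¹ - Real.log (Zs X w) := by
  have hZ : Zs X w ≠ 0 := (Zs_pos hX w).ne'
  have h1 : ∀ x ∈ X, gibbs X w x * Real.log (gibbs X w x)
      = Real.exp ⟪w, x⟫_ℝ * ⟪w, x⟫_ℝ * (Zs X w)⁻¹
        - Real.exp ⟪w, x⟫_ℝ * (Zs X w)⁻¹ * Real.log (Zs X w) := by
    intro x _
    rw [gibbs]
    show Real.exp ⟪w, x⟫_ℝ / Zs X w * Real.log (Real.exp ⟪w, x⟫_ℝ / Zs X w) = _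
    rw [Real.log_div (Real.exp_ne_zero _) hZ, Real.log_exp]
    field_simp
  rw [negEnt, Finset.sum_congr rfl h1, Finset.sum_sub_distrib, ← Finset.sum_mul, ← Finset.sum_mul,
    ← Finset.sum_mul]
  rw [show (∑ x ∈ X, Real.exp ⟪w, x⟫_ℝ) * (Zs X w)⁻¹ = 1 from mul_inv_cancel₀ hZ, one_mul]

lemma rloss_eq {X : Finset (EuclideanSpace ℝ (Fin d))} (hX : X.Nonempty) {β ρ lam : ℝ}
    (hρ : ρ ≠ 0) (c : EuclideanSpace ℝ (Fin d)) :
    rloss X β ρ lam c = fun w => (1 - β) * Ff X c lam w + (β / ρ) * Ff X (ρ • c) lam (ρ • w) := by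
  funext w
  have hZ1 : Zs X w ≠ 0 := (Zs_pos hX w).ne'
  have hZ2 : Zs X (ρ • w) ≠ 0 := (Zs_pos hX (ρ • w)).ne'
  have hsum : (∑ x ∈ X, pmix X β ρ w x * ⟪c, x⟫_ℝ)
      = (1 - β) * ((∑ x ∈ X, Real.exp ⟪w, x⟫_ℝ * ⟪c, x⟫_ℝ) * (Zs X w)⁻¹)
        + β * ((∑ x ∈ X, Real.exp ⟪ρ • w, x⟫_ℝ * ⟪c, x⟫_ℝ) * (Zs X (ρ • w))⁻¹) := by
    rw [Finset.sum_mul, Finset.sum_mul, Finset.mul_sum, Finset.mul_sum, ← Finset.sum_add_distrib]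
    refine Finset.sum_congr rfl fun x _ => ?_
    rw [pmix, gibbs, gibbs]
    show ((1 - β) * (Real.exp ⟪w, x⟫_ℝ / Zs X w)
      + β * (Real.exp ⟪ρ • w, x⟫_ℝ / Zs X (ρ • w))) * ⟪c, x⟫_ℝ = _
    field_simp
  have hrc : (∑ x ∈ X, Real.exp ⟪ρ • w, x⟫_ℝ * ⟪ρ • c, x⟫_ℝ)
      = ρ * ∑ x ∈ X, Real.exp ⟪ρ • w, x⟫_ℝ * ⟪c, x⟫_ℝ := by
    rw [Finset.mul_sum]
    refine Finset.sum_congr rfl fun x _ => ?_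
    rw [show ⟪ρ • c, x⟫_ℝ = ρ * ⟪c, x⟫_ℝ from real_inner_smul_left c x ρ]; ring

  rw [rloss, reg, negEnt_eq hX w, negEnt_eq hX (ρ • w), hsum, Ff, Ff, hrc]
  field_simp
  ring

theorem inner_hasFDeriv (x w : EuclideanSpace ℝ (Fin d)) :
    HasFDerivAt (fun w : EuclideanSpace ℝ (Fin d) => ⟪w, x⟫_ℝ) (innerSL ℝ x) w := by
  have : (fun w : EuclideanSpace ℝ (Fin d) => ⟪w, x⟫_ℝ) = fun w => innerSL ℝ x w := by
    funext w; rw [innerSL_apply_apply]; exact (real_inner_comm w x).symm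
  rw [this]; exact (innerSL ℝ x).hasFDerivAt

theorem exp_inner_hasFDeriv (x w : EuclideanSpace ℝ (Fin d)) :
    HasFDerivAt (fun w : EuclideanSpace ℝ (Fin d) => Real.exp ⟪w, x⟫_ℝ)
    (Real.exp ⟪w, x⟫_ℝ • innerSL ℝ x) w :=
  (inner_hasFDeriv x w).exp

theorem Ff_hasFDeriv (X : Finset (EuclideanSpace ℝ (Fin d))) (hX : X.Nonempty)
    (c : EuclideanSpace ℝ (Fin d)) (lam : ℝ) (w : EuclideanSpace ℝ (Fin d)) :
    ∃ D : EuclideanSpace ℝ (Fin d) →L[ℝ] ℝ, HasFDerivAt (Ff X c lam) D w ∧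
      ∀ v : EuclideanSpace ℝ (Fin d),
      D v = ((∑ x ∈ X, Real.exp ⟪w, x⟫_ℝ * ((⟪c, x⟫_ℝ + lam * ⟪w, x⟫_ℝ) * ⟪x, v⟫_ℝ)) * (Zs X w)⁻¹
        - ((∑ x ∈ X, Real.exp ⟪w, x⟫_ℝ * (⟪c, x⟫_ℝ + lam * ⟪w, x⟫_ℝ)) * (Zs X w)⁻¹)
          * ((∑ x ∈ X, Real.exp ⟪w, x⟫_ℝ * ⟪x, v⟫_ℝ) * (Zs X w)⁻¹)) := by
  have hZne : Zs X w ≠ 0 := (Zs_pos hX w).ne'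
  have hZ : HasFDerivAt (Zs X) (∑ x ∈ X, Real.exp ⟪w, x⟫_ℝ • innerSL ℝ x) w :=
    HasFDerivAt.fun_sum fun x _ => exp_inner_hasFDeriv x w
  have hInv : HasFDerivAt (fun w => (Zs X w)⁻¹)
      ((-((Zs X w) ^ 2)⁻¹) • (∑ x ∈ X, Real.exp ⟪w, x⟫_ℝ • innerSL ℝ x)) w :=
    (hasDerivAt_inv hZne).comp_hasFDerivAt w hZ
  have hGc : HasFDerivAt
      (fun w : EuclideanSpace ℝ (Fin d) => ∑ x ∈ X, Real.exp ⟪w, x⟫_ℝ * ⟪c, x⟫_ℝ)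
      (∑ x ∈ X, ⟪c, x⟫_ℝ • (Real.exp ⟪w, x⟫_ℝ • innerSL ℝ x)) w :=
    HasFDerivAt.fun_sum fun x _ => (exp_inner_hasFDeriv x w).mul_const _
  have hGw : HasFDerivAt
      (fun w : EuclideanSpace ℝ (Fin d) => ∑ x ∈ X, Real.exp ⟪w, x⟫_ℝ * ⟪w, x⟫_ℝ)
      (∑ x ∈ X, (Real.exp ⟪w, x⟫_ℝ • innerSL ℝ x
        + ⟪w, x⟫_ℝ • (Real.exp ⟪w, x⟫_ℝ • innerSL ℝ x))) w :=
    HasFDerivAt.fun_sum fun x _ => (exp_inner_hasFDeriv x w).mul (inner_hasFDeriv x w)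
  have hLog : HasFDerivAt (fun w => Real.log (Zs X w))
      ((Zs X w)⁻¹ • (∑ x ∈ X, Real.exp ⟪w, x⟫_ℝ • innerSL ℝ x)) w := hZ.log hZne
  refine ⟨_, ((hGc.mul hInv).add (((hGw.mul hInv).sub hLog).const_mul lam)), fun v => ?_⟩
  simp only [ContinuousLinearMap.add_apply, ContinuousLinearMap.coe_smul', Pi.smul_apply,
    ContinuousLinearMap.sub_apply, ContinuousLinearMap.sum_apply, ContinuousLinearMap.smul_apply,
    innerSL_apply_apply, smul_eq_mul, ContinuousLinearMap.coe_sub', Pi.sub_apply, neg_mul]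
  have e1 : ∑ x ∈ X, ⟪c, x⟫_ℝ * (Real.exp ⟪w, x⟫_ℝ * ⟪x, v⟫_ℝ)
      = ∑ x ∈ X, Real.exp ⟪w, x⟫_ℝ * (⟪c, x⟫_ℝ * ⟪x, v⟫_ℝ) :=
    Finset.sum_congr rfl fun x _ => by ring
  have e2 : ∑ x ∈ X, (Real.exp ⟪w, x⟫_ℝ * ⟪x, v⟫_ℝ + ⟪w, x⟫_ℝ * (Real.exp ⟪w, x⟫_ℝ * ⟪x, v⟫_ℝ))
      = (∑ x ∈ X, Real.exp ⟪w, x⟫_ℝ * ⟪x, v⟫_ℝ)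
        + ∑ x ∈ X, Real.exp ⟪w, x⟫_ℝ * (⟪w, x⟫_ℝ * ⟪x, v⟫_ℝ) := by
    rw [Finset.sum_add_distrib]
    congr 1
    exact Finset.sum_congr rfl fun x _ => by ring
  have e3 : ∑ x ∈ X, Real.exp ⟪w, x⟫_ℝ * ((⟪c, x⟫_ℝ + lam * ⟪w, x⟫_ℝ) * ⟪x, v⟫_ℝ)
      = (∑ x ∈ X, Real.exp ⟪w, x⟫_ℝ * (⟪c, x⟫_ℝ * ⟪x, v⟫_ℝ))
        + lam * ∑ x ∈ X, Real.exp ⟪w, x⟫_ℝ * (⟪w, x⟫_ℝ * ⟪x, v⟫_ℝ) := by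
    rw [Finset.mul_sum, ← Finset.sum_add_distrib]
    exact Finset.sum_congr rfl fun x _ => by ring
  have e4 : ∑ x ∈ X, Real.exp ⟪w, x⟫_ℝ * (⟪c, x⟫_ℝ + lam * ⟪w, x⟫_ℝ)
      = (∑ x ∈ X, Real.exp ⟪w, x⟫_ℝ * ⟪c, x⟫_ℝ)
        + lam * ∑ x ∈ X, Real.exp ⟪w, x⟫_ℝ * ⟪w, x⟫_ℝ := by
    rw [Finset.mul_sum, ← Finset.sum_add_distrib]
    exact Finset.sum_congr rfl fun x _ => by ring
  rw [e1, e2, e3, e4]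
  field_simp
  ring

end AuxGrad

/-- For every `w`, the regularized loss satisfies
`∇L_λ(w)·(c + λw) = (1−β)Var_{x∼φ(·;w)}[(c+λw)·x] + βρ Var_{x∼φ(·;ρw)}[(c+λw)·x]`. -/
theorem gradient_rloss_correlation_identity {d : ℕ} (hd : 1 ≤ d)
    (X : Finset (EuclideanSpace ℝ (Fin d))) (hX : X.Nonempty)
    (D : ℝ) (hD : ∀ x ∈ X, ‖x‖ ≤ D)
    (β ρ : ℝ) (hβ : β ∈ Set.Ioo (0 : ℝ) 1) (hρ : ρ ∈ Set.Ioo (0 : ℝ) 1)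
    (c : EuclideanSpace ℝ (Fin d)) (lam : ℝ) (hlam : 0 < lam) :
    ∀ w : EuclideanSpace ℝ (Fin d),
      ⟪gradient (rloss X β ρ lam c) w, c + lam • w⟫_ℝ
        = (1 - β) * gibbsVar X w (fun x => ⟪c + lam • w, x⟫_ℝ)
          + β * ρ * gibbsVar X (ρ • w) (fun x => ⟪c + lam • w, x⟫_ℝ) := by
  intro w
  have hρne : ρ ≠ 0 := ne_of_gt hρ.1
  have hZ1 : Zs X w ≠ 0 := (Zs_pos hX w).ne'
  have hZ2 : Zs X (ρ • w) ≠ 0 := (Zs_pos hX (ρ • w)).ne'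
  obtain ⟨D1, hD1, hD1v⟩ := Ff_hasFDeriv X hX c lam w
  obtain ⟨D2, hD2, hD2v⟩ := Ff_hasFDeriv X hX (ρ • c) lam (ρ • w)
  have hM : HasFDerivAt (fun u : EuclideanSpace ℝ (Fin d) => ρ • u)
      (ρ • ContinuousLinearMap.id ℝ (EuclideanSpace ℝ (Fin d))) w :=
    (hasFDerivAt_id w).const_smul ρ
  have hcomp : HasFDerivAt (fun u : EuclideanSpace ℝ (Fin d) => Ff X (ρ • c) lam (ρ • u))
      (D2.comp (ρ • ContinuousLinearMap.id ℝ (EuclideanSpace ℝ (Fin d)))) w := hD2.comp w hM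
  set L' : EuclideanSpace ℝ (Fin d) →L[ℝ] ℝ :=
    (1 - β) • D1 + (β / ρ) • (D2.comp (ρ • ContinuousLinearMap.id ℝ (EuclideanSpace ℝ (Fin d))))
    with hL'def
  have hL : HasFDerivAt (rloss X β ρ lam c) L' w := by
    rw [rloss_eq hX hρne c]
    exact (hD1.const_mul (1 - β)).add (hcomp.const_mul (β / ρ))
  have hgrad : gradient (rloss X β ρ lam c) w = (InnerProductSpace.toDual ℝ _).symm L' :=
    (hasFDerivAt_iff_hasGradientAt.mp hL).gradient
  rw [hgrad, InnerProductSpace.toDual_symm_apply]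
  set v : EuclideanSpace ℝ (Fin d) := c + lam • w with hv
  have happ : L' v = (1 - β) * D1 v + (β / ρ) * D2 (ρ • v) := by
    simp only [hL'def, ContinuousLinearMap.add_apply, ContinuousLinearMap.smul_apply,
      ContinuousLinearMap.coe_comp', Function.comp_apply, smul_eq_mul,
      ContinuousLinearMap.coe_smul', Pi.smul_apply, ContinuousLinearMap.coe_id', id_eq]
  rw [happ, hD1v, hD2v]
  -- rewrite the sums
  have k1 : ∀ x : EuclideanSpace ℝ (Fin d), ⟪c, x⟫_ℝ + lam * ⟪w, x⟫_ℝ = ⟪v, x⟫_ℝ := by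
    intro x; rw [hv, inner_add_left, real_inner_smul_left]
  have k2 : ∀ x : EuclideanSpace ℝ (Fin d), ⟪x, v⟫_ℝ = ⟪v, x⟫_ℝ := fun x => real_inner_comm _ _
  have k3 : ∀ x : EuclideanSpace ℝ (Fin d),
      ⟪ρ • c, x⟫_ℝ + lam * ⟪ρ • w, x⟫_ℝ = ρ * ⟪v, x⟫_ℝ := by
    intro x
    rw [show ⟪ρ • c, x⟫_ℝ = ρ * ⟪c, x⟫_ℝ from real_inner_smul_left c x ρ,
      show ⟪ρ • w, x⟫_ℝ = ρ * ⟪w, x⟫_ℝ from real_inner_smul_left w x ρ, ← k1 x]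
    ring
  have k4 : ∀ x : EuclideanSpace ℝ (Fin d), ⟪x, ρ • v⟫_ℝ = ρ * ⟪v, x⟫_ℝ := by
    intro x; rw [real_inner_smul_right, k2 x]
  have s1 : ∑ x ∈ X, Real.exp ⟪w, x⟫_ℝ * ((⟪c, x⟫_ℝ + lam * ⟪w, x⟫_ℝ) * ⟪x, v⟫_ℝ)
      = ∑ x ∈ X, Real.exp ⟪w, x⟫_ℝ * ⟪v, x⟫_ℝ ^ 2 :=
    Finset.sum_congr rfl fun x _ => by rw [k1 x, k2 x, sq]
  have s2 : ∑ x ∈ X, Real.exp ⟪w, x⟫_ℝ * (⟪c, x⟫_ℝ + lam * ⟪w, x⟫_ℝ)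
      = ∑ x ∈ X, Real.exp ⟪w, x⟫_ℝ * ⟪v, x⟫_ℝ :=
    Finset.sum_congr rfl fun x _ => by rw [k1 x]
  have s3 : ∑ x ∈ X, Real.exp ⟪w, x⟫_ℝ * ⟪x, v⟫_ℝ
      = ∑ x ∈ X, Real.exp ⟪w, x⟫_ℝ * ⟪v, x⟫_ℝ :=
    Finset.sum_congr rfl fun x _ => by rw [k2 x]
  have s4 : ∑ x ∈ X, Real.exp ⟪ρ • w, x⟫_ℝ * ((⟪ρ • c, x⟫_ℝ + lam * ⟪ρ • w, x⟫_ℝ) * ⟪x, ρ • v⟫_ℝ)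
      = ρ ^ 2 * ∑ x ∈ X, Real.exp ⟪ρ • w, x⟫_ℝ * ⟪v, x⟫_ℝ ^ 2 := by
    rw [Finset.mul_sum]
    exact Finset.sum_congr rfl fun x _ => by rw [k3 x, k4 x]; ring
  have s5 : ∑ x ∈ X, Real.exp ⟪ρ • w, x⟫_ℝ * (⟪ρ • c, x⟫_ℝ + lam * ⟪ρ • w, x⟫_ℝ)
      = ρ * ∑ x ∈ X, Real.exp ⟪ρ • w, x⟫_ℝ * ⟪v, x⟫_ℝ := by
    rw [Finset.mul_sum]
    exact Finset.sum_congr rfl fun x _ => by rw [k3 x]; ring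
  have s6 : ∑ x ∈ X, Real.exp ⟪ρ • w, x⟫_ℝ * ⟪x, ρ • v⟫_ℝ
      = ρ * ∑ x ∈ X, Real.exp ⟪ρ • w, x⟫_ℝ * ⟪v, x⟫_ℝ := by
    rw [Finset.mul_sum]
    exact Finset.sum_congr rfl fun x _ => by rw [k4 x]; ring
  rw [s1, s2, s3, s4, s5, s6, gibbsVar, gibbsVar, gibbsExp_eq, gibbsExp_eq, gibbsExp_eq,
    gibbsExp_eq]
  field_simp

end
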